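/- Let n ≥ 1, let a : Fin n → ℕ satisfy a i ≥ 2 for every i, and let f(z) = ∑ i, (z i)^(a i) on EuclideanSpace ℂ (Fin n). Fix δ > 0 and let N(δ) = f⁻¹(Metric.sphere (0:ℂ) δ) be the Milnor tube. Then the restriction of f to N(δ), as a map N(δ) → Metric.sphere (0:ℂ) δ, is the projection of a topological fiber bundle: there exist a topological space F and, for every point b of the circle of radius δ, a trivialization with fiber F whose base set contains b. -/

import Mathlib

/-- The Pham–Brieskorn polynomial `z ↦ ∑ i, (z i) ^ (a i)`. -/
noncomputable def pbPoly (n : ℕ) (a : Fin n → ℕ) (z : EuclideanSpace ℂ (Fin n)) : ℂ :=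
  ∑ i, z i ^ a i

/-- The restriction of `f` to the Milnor tube `N(δ) = f⁻¹(∂D_δ)`, viewed as a
map `N(δ) → ∂D_δ` onto the circle of radius `δ`. -/
noncomputable def pbTubeMap (n : ℕ) (a : Fin n → ℕ) (δ : ℝ)
    (z : (pbPoly n a ⁻¹' Metric.sphere (0 : ℂ) δ : Set (EuclideanSpace ℂ (Fin n)))) :
    Metric.sphere (0 : ℂ) δ :=
  ⟨pbPoly n a z.1, z.2⟩

lemma pbPoly_continuous (n : ℕ) (a : Fin n → ℕ) : Continuous (pbPoly n a) := by
  unfold pbPoly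
  exact continuous_finset_sum _ fun i _ => (PiLp.continuous_apply 2 _ i).pow _

/-- **the fibration on the Milnor tube.** For every `δ > 0`,
the restriction of the Pham–Brieskorn polynomial `f` to the Milnor tube
`N(δ) = f⁻¹(∂D_δ)`, as a map `N(δ) → ∂D_δ`, is the projection of a
topological fiber bundle: there is a topological space `F` such that every
point of the circle of radius `δ` lies in the base set of some
trivialization with fiber `F`. -/
theorem phamBrieskorn_milnor_fibration_tube
    (n : ℕ) (hn : 1 ≤ n) (a : Fin n → ℕ) (ha : ∀ i, 2 ≤ a i)
    (δ : ℝ) (hδ : 0 < δ) :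
    ∃ (F : Type) (tF : TopologicalSpace F),
      ∀ b : Metric.sphere (0 : ℂ) δ,
        ∃ e : @Bundle.Trivialization (Metric.sphere (0 : ℂ) δ) F
            (pbPoly n a ⁻¹' Metric.sphere (0 : ℂ) δ : Set (EuclideanSpace ℂ (Fin n)))
            _ tF _ (pbTubeMap n a δ),
          b ∈ e.baseSet := by
  classical
  refine ⟨↥(pbPoly n a ⁻¹' {(δ:ℂ)}), inferInstance, fun b => ?_⟩
  have hδ' : (δ:ℂ) ≠ 0 := by simpa using hδ.ne'
  have haN : ∀ i, a i ≠ 0 := fun i => by have := ha i; omega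
  -- basic facts about points on the sphere
  have habs : ∀ v : ℂ, v ∈ Metric.sphere (0:ℂ) δ → ‖v‖ = δ := fun v hv => by
    simpa using mem_sphere_zero_iff_norm.mp hv
  have hne0 : ∀ v : ℂ, v ∈ Metric.sphere (0:ℂ) δ → v ≠ 0 := fun v hv h0 => by
    rw [h0] at hv; have := habs 0 hv; simp at this; exact hδ.ne' this.symm
  have hb0 : (b:ℂ) ≠ 0 := hne0 _ b.2
  -- roots of b/δ
  set c : ℂ := (b:ℂ) / δ with hc
  have hc0 : c ≠ 0 := div_ne_zero hb0 hδ'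
  have hβex : ∀ i : Fin n, ∃ x : ℂ, x ^ a i = c := fun i =>
    IsAlgClosed.exists_pow_nat_eq c (Nat.pos_of_ne_zero (haN i))
  set β : Fin n → ℂ := fun i => Classical.choose (hβex i) with hβdef
  have hβ : ∀ i, β i ^ a i = c := fun i => Classical.choose_spec (hβex i)
  have hβ0 : ∀ i, β i ≠ 0 := fun i h => hc0 (by rw [← hβ i, h, zero_pow (haN i)])
  -- the branch of the root
  set r : ℂ → Fin n → ℂ := fun v i => (v / b) ^ ((a i : ℂ))⁻¹ with hrdef
  have hr_pow : ∀ v i, (r v i) ^ a i = v / b := fun v i =>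
    Complex.cpow_nat_inv_pow _ (haN i)
  have hr0 : ∀ v, v ≠ 0 → ∀ i, r v i ≠ 0 := fun v hv i h => by
    have := hr_pow v i
    rw [h, zero_pow (haN i)] at this
    exact div_ne_zero hv hb0 this.symm
  -- slit plane membership
  have hslit : ∀ v : ℂ, v ∈ Metric.sphere (0:ℂ) δ → v ≠ -(b:ℂ) →
      v / b ∈ Complex.slitPlane := by
    intro v hv hvb
    rw [Complex.mem_slitPlane_iff_not_le_zero]
    intro hle
    have him : (v / b).im = 0 := by simpa using (Complex.le_def.mp hle).2
    have hre : (v / b).re ≤ 0 := by simpa using (Complex.le_def.mp hle).1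
    have habsvb : ‖v / b‖ = 1 := by
      rw [norm_div, habs v hv, habs _ b.2, div_self hδ.ne']
    have hvr : v / b = ((v / b).re : ℂ) := Complex.ext rfl (by simp [him])
    have habs1 : |(v / b).re| = 1 := by
      rw [hvr] at habsvb; simpa using habsvb
    have hre1 : (v / b).re = -1 := by
      rcases (abs_eq (by norm_num : (0:ℝ) ≤ 1)).mp habs1 with h | h
      · rw [h] at hre; norm_num at hre
      · exact h
    apply hvb
    have hdiv : v / b = -1 := by rw [hvr, hre1]; norm_num
    have := (div_eq_iff hb0).mp hdiv
    simpa using this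
  -- the two maps
  have hfz : ∀ z : (pbPoly n a ⁻¹' Metric.sphere (0 : ℂ) δ : Set (EuclideanSpace ℂ (Fin n))),
      pbPoly n a z.1 ≠ 0 := fun z => hne0 _ z.2
  set φ : (pbPoly n a ⁻¹' Metric.sphere (0 : ℂ) δ : Set (EuclideanSpace ℂ (Fin n))) →
      EuclideanSpace ℂ (Fin n) :=
    fun z => WithLp.toLp 2 fun i => z.1 i * (β i)⁻¹ * (r (pbPoly n a z.1) i)⁻¹ with hφdef
  set σ : (Metric.sphere (0:ℂ) δ) × ↥(pbPoly n a ⁻¹' {(δ:ℂ)}) → EuclideanSpace ℂ (Fin n) :=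
    fun p => WithLp.toLp 2 fun i => p.2.1 i * β i * r (p.1 : ℂ) i with hσdef
  have hφval : ∀ z, pbPoly n a (φ z) = δ := by
    intro z
    have hz0 := hfz z
    have h1 : pbPoly n a (φ z) = ∑ i, (φ z i) ^ a i := rfl
    have h2 : ∀ i, (φ z i) ^ a i
        = z.1 i ^ a i * (c⁻¹ * (pbPoly n a z.1 / b)⁻¹) := by
      intro i
      have he : φ z i = z.1 i * (β i)⁻¹ * (r (pbPoly n a z.1) i)⁻¹ := rfl
      rw [he, mul_pow, mul_pow, inv_pow, inv_pow, hβ, hr_pow]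
      ring
    have h3 : (∑ i, z.1 i ^ a i) = pbPoly n a z.1 := rfl
    rw [h1]
    simp only [h2]
    rw [← Finset.sum_mul, h3, hc]
    field_simp
  have hσval : ∀ p, pbPoly n a (σ p) = (p.1 : ℂ) := by
    intro p
    have hy : pbPoly n a p.2.1 = (δ:ℂ) := p.2.2
    have h1 : pbPoly n a (σ p) = ∑ i, (σ p i) ^ a i := rfl
    have h2 : ∀ i, (σ p i) ^ a i = p.2.1 i ^ a i * (c * ((p.1:ℂ) / b)) := by
      intro i
      have he : σ p i = p.2.1 i * β i * r (p.1:ℂ) i := rfl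
      rw [he, mul_pow, mul_pow, hβ, hr_pow]
      ring
    have h3 : (∑ i, p.2.1 i ^ a i) = pbPoly n a p.2.1 := rfl
    rw [h1]
    simp only [h2]
    rw [← Finset.sum_mul, h3, hy, hc]
    field_simp
  have hφmem : ∀ z, φ z ∈ pbPoly n a ⁻¹' {(δ:ℂ)} := fun z => hφval z
  have hσmem : ∀ p, σ p ∈ pbPoly n a ⁻¹' Metric.sphere (0:ℂ) δ := fun p => by
    have h1 : pbPoly n a (σ p) = (p.1 : ℂ) := hσval p
    show pbPoly n a (σ p) ∈ Metric.sphere (0:ℂ) δ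
    rw [h1]; exact p.1.2
  -- continuity of the polynomial on the tube
  have hcontf : Continuous fun z : (pbPoly n a ⁻¹' Metric.sphere (0 : ℂ) δ :
      Set (EuclideanSpace ℂ (Fin n))) => pbPoly n a z.1 :=
    (pbPoly_continuous n a).comp continuous_subtype_val
  refine ⟨{
      toFun := fun z => (pbTubeMap n a δ z, ⟨φ z, hφmem z⟩)
      invFun := fun p => ⟨σ p, hσmem p⟩
      source := {z | pbPoly n a z.1 ≠ -(b:ℂ)}
      target := {v : Metric.sphere (0:ℂ) δ | (v:ℂ) ≠ -(b:ℂ)} ×ˢ Set.univ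
      map_source' := fun z hz => by
        simp only [Set.mem_prod, Set.mem_setOf_eq, Set.mem_univ, and_true]
        exact hz
      map_target' := fun p hp => by
        simp only [Set.mem_setOf_eq]
        show pbPoly n a (σ p) ≠ -(b:ℂ)
        rw [hσval p]
        exact hp.1
      left_inv' := by
        intro z _
        apply Subtype.ext
        ext i
        have h1 : r (pbPoly n a z.1) i ≠ 0 := hr0 _ (hfz z) i
        have h2 : β i ≠ 0 := hβ0 i
        show φ z i * β i * r (pbPoly n a z.1) i = z.1 i
        have he : φ z i = z.1 i * (β i)⁻¹ * (r (pbPoly n a z.1) i)⁻¹ := rfl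
        rw [he]
        field_simp
      right_inv' := by
        intro p _
        have h1 : pbPoly n a (σ p) = (p.1 : ℂ) := hσval p
        refine Prod.ext (Subtype.ext ?_) (Subtype.ext ?_)
        · exact h1
        · ext i
          have h2 : r (p.1:ℂ) i ≠ 0 := hr0 _ (hne0 _ p.1.2) i
          have h3 : β i ≠ 0 := hβ0 i
          show σ p i * (β i)⁻¹ * (r (pbPoly n a (σ p)) i)⁻¹ = p.2.1 i
          rw [h1]
          have he : σ p i = p.2.1 i * β i * r (p.1:ℂ) i := rfl
          rw [he]
          field_simp
      open_source := isOpen_compl_singleton.preimage hcontf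
      open_target := by
        exact IsOpen.prod (isOpen_compl_singleton.preimage continuous_subtype_val) isOpen_univ
      continuousOn_toFun := by
        apply ContinuousOn.prodMk
        · exact (Continuous.subtype_mk hcontf _).continuousOn
        · rw [Topology.IsInducing.subtypeVal.continuousOn_iff, (PiLp.homeomorph 2 _).isInducing.continuousOn_iff]
          refine continuousOn_pi.mpr fun i => ?_
          intro z hz
          have hslitz : pbPoly n a z.1 / b ∈ Complex.slitPlane := hslit _ z.2 hz
          have hC : ContinuousAt (fun z : (pbPoly n a ⁻¹' Metric.sphere (0 : ℂ) δ :
              Set (EuclideanSpace ℂ (Fin n))) => r (pbPoly n a z.1) i) z :=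
            (hcontf.continuousAt.div_const _).cpow continuousAt_const hslitz
          exact ((((PiLp.continuous_apply 2 _ i).comp continuous_subtype_val).continuousAt.mul
            continuousAt_const).mul (hC.inv₀ (hr0 _ (hfz z) i))).continuousWithinAt
      continuousOn_invFun := by
        rw [Topology.IsInducing.subtypeVal.continuousOn_iff, (PiLp.homeomorph 2 _).isInducing.continuousOn_iff]
        refine continuousOn_pi.mpr fun i => ?_
        intro p hp
        have hslitp : (p.1 : ℂ) / b ∈ Complex.slitPlane := hslit _ p.1.2 hp.1
        have hC : ContinuousAt (fun p : (Metric.sphere (0:ℂ) δ) ×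
            ↥(pbPoly n a ⁻¹' {(δ:ℂ)}) => r (p.1:ℂ) i) p :=
          (((continuous_subtype_val.comp continuous_fst).continuousAt).div_const _).cpow
            continuousAt_const hslitp
        have hy : ContinuousAt (fun p : (Metric.sphere (0:ℂ) δ) ×
            ↥(pbPoly n a ⁻¹' {(δ:ℂ)}) => p.2.1 i) p :=
          ((PiLp.continuous_apply 2 _ i).comp (continuous_subtype_val.comp continuous_snd)).continuousAt
        exact ((hy.mul continuousAt_const).mul hC).continuousWithinAt
      baseSet := {v : Metric.sphere (0:ℂ) δ | (v:ℂ) ≠ -(b:ℂ)}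
      open_baseSet := isOpen_compl_singleton.preimage continuous_subtype_val
      source_eq := rfl
      target_eq := rfl
      proj_toFun := fun z _ => rfl }, ?_⟩
  show (b:ℂ) ≠ -(b:ℂ)
  intro h
  apply hb0
  have h2 : (2:ℂ) * b = 0 := by linear_combination h
  simpa using h2
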